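/- arXiv:2305.16534 — 2 statements merged into one kernel-verified Lean document; each statement's English description precedes it below -/
import Mathlib

section
/- Let σ: ℝ → ℝ be positively homogeneous of degree one and let f_θ(x) = Σ_{k=1}^K v_k σ(w_kᵀx) with v_k ∈ ℝ^D, w_k ∈ ℝ^d. If {(v_k, w_k)}_k minimizes J(θ) = L(θ) + (λ/2)Σ_k(‖v_k‖₂² + ‖w_k‖₂²), where L(θ) depends on θ only through the function f_θ, then ‖v_k‖₂ = ‖w_k‖₂ for every k with (v_k, w_k) ≠ (0,0). -/
open scoped RealInnerProductSpace

/-- Neural Balance Theorem for shallow networks. -/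
theorem neural_balance {d D K : ℕ} (σ : ℝ → ℝ)
    (hσ : ∀ γ t : ℝ, 0 < γ → σ (γ * t) = γ * σ t)
    (L : (EuclideanSpace ℝ (Fin d) → EuclideanSpace ℝ (Fin D)) → ℝ)
    (lam : ℝ) (hlam : 0 < lam)
    (v : Fin K → EuclideanSpace ℝ (Fin D)) (w : Fin K → EuclideanSpace ℝ (Fin d))
    (hmin : ∀ (v' : Fin K → EuclideanSpace ℝ (Fin D)) (w' : Fin K → EuclideanSpace ℝ (Fin d)),
      L (fun x => ∑ k, σ ⟪w k, x⟫ • v k) + lam / 2 * ∑ k, (‖v k‖ ^ 2 + ‖w k‖ ^ 2)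
        ≤ L (fun x => ∑ k, σ ⟪w' k, x⟫ • v' k) + lam / 2 * ∑ k, (‖v' k‖ ^ 2 + ‖w' k‖ ^ 2)) :
    ∀ k : Fin K, (v k, w k) ≠ (0, 0) → ‖v k‖ = ‖w k‖ := by
  intro k hk
  set a := ‖v k‖ with ha
  set b := ‖w k‖ with hb
  have key : ∀ γ : ℝ, 0 < γ → a ^ 2 + b ^ 2 ≤ (γ * a) ^ 2 + (γ⁻¹ * b) ^ 2 := by
    intro γ hγ
    have hγi : (0:ℝ) < γ⁻¹ := by positivity
    set v' := Function.update v k (γ • v k) with hv'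
    set w' := Function.update w k (γ⁻¹ • w k) with hw'
    have hfun : (fun x => ∑ j, σ ⟪w' j, x⟫ • v' j)
        = (fun x => ∑ j, σ ⟪w j, x⟫ • v j) := by
      funext x
      refine Finset.sum_congr rfl fun j _ => ?_
      by_cases hj : j = k
      · subst hj
        simp only [hv', hw', Function.update_self]
        rw [real_inner_smul_left, hσ γ⁻¹ _ hγi, smul_smul]
        congr 1
        field_simp
      · simp [hv', hw', Function.update_of_ne hj]
    have hupd : ∀ j, ‖v' j‖ ^ 2 + ‖w' j‖ ^ 2
        = Function.update (fun j => ‖v j‖ ^ 2 + ‖w j‖ ^ 2) k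
            ((γ * a) ^ 2 + (γ⁻¹ * b) ^ 2) j := by
      intro j
      by_cases hj : j = k
      · subst hj
        simp [hv', hw', norm_smul, abs_of_pos hγ, abs_of_pos hγi, mul_pow, ha, hb]
      · simp [hv', hw', Function.update_of_ne hj]
    have hsum : ∑ j, (‖v' j‖ ^ 2 + ‖w' j‖ ^ 2)
        = ((γ * a) ^ 2 + (γ⁻¹ * b) ^ 2) + ∑ j ∈ Finset.univ.erase k,
            (‖v j‖ ^ 2 + ‖w j‖ ^ 2) := by
      rw [Finset.sum_congr rfl fun j _ => hupd j]
      rw [Finset.sum_update_of_mem (Finset.mem_univ k),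
        Finset.sdiff_singleton_eq_erase]
    have hsum2 : ∑ j, (‖v j‖ ^ 2 + ‖w j‖ ^ 2)
        = (a ^ 2 + b ^ 2) + ∑ j ∈ Finset.univ.erase k,
            (‖v j‖ ^ 2 + ‖w j‖ ^ 2) :=
      (Finset.add_sum_erase _ _ (Finset.mem_univ k)).symm
    have h := hmin v' w'
    rw [hfun, hsum, hsum2] at h
    have hlam2 : (0:ℝ) < lam / 2 := by positivity
    nlinarith [h, hlam2]
  by_cases hva : a = 0
  · have hvk : v k = 0 := norm_eq_zero.mp hva
    have hwk : w k ≠ 0 := by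
      intro hw0; exact hk (by rw [hvk, hw0])
    have hbpos : 0 < b := norm_pos_iff.mpr hwk
    have h2 := key 2 (by norm_num)
    rw [hva] at h2
    nlinarith
  · by_cases hwb : b = 0
    · have hapos : 0 < a := lt_of_le_of_ne (norm_nonneg _) (Ne.symm hva)
      have h2 := key (1/2) (by norm_num)
      rw [hwb] at h2
      nlinarith
    · have hapos : 0 < a := lt_of_le_of_ne (norm_nonneg _) (Ne.symm hva)
      have hbpos : 0 < b := lt_of_le_of_ne (norm_nonneg _) (Ne.symm hwb)
      set γ := Real.sqrt (b / a) with hγdef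
      have hγpos : 0 < γ := Real.sqrt_pos.mpr (by positivity)
      have hγsq : γ ^ 2 = b / a := Real.sq_sqrt (by positivity)
      have h := key γ hγpos
      have hγinv : (γ⁻¹) ^ 2 = a / b := by
        rw [inv_pow, hγsq]
        field_simp
      have h1 : (γ * a) ^ 2 = a * b := by
        rw [mul_pow, hγsq]; field_simp
      have h2 : (γ⁻¹ * b) ^ 2 = a * b := by
        rw [mul_pow, hγinv]; field_simp
      nlinarith [h, sq_nonneg (a - b)]
end

section
/- Let Ψ ∈ ℝ^{D×N} and Φ ∈ ℝ^{K×N} with rank(Φ) = r_Φ, rank(Ψ) = r_Ψ, row space of Ψ contained in row space of Φ, and K ≥ r_Ψ. Then there exists a minimizer V of Σ_{k=1}^K ‖v_k‖₂ subject to Ψ = VΦ having at most r_Φ·r_Ψ nonzero columns. -/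
open Matrix

namespace MTLAux

variable {D N K : ℕ}

/-- Euclidean norm of a vector, written with `Real.sqrt`. -/
noncomputable def en {D : ℕ} (x : Fin D → ℝ) : ℝ := Real.sqrt (∑ i, x i ^ 2)

/-- The group-lasso objective. -/
noncomputable def obj (V : Matrix (Fin D) (Fin K) ℝ) : ℝ :=
  ∑ k, Real.sqrt (∑ i, (V i k) ^ 2)

lemma obj_eq (V : Matrix (Fin D) (Fin K) ℝ) : obj V = ∑ k, en (Vᵀ k) := rfl

lemma en_nonneg (x : Fin D → ℝ) : 0 ≤ en x := Real.sqrt_nonneg _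

lemma en_eq_norm (x : Fin D → ℝ) :
    en x = ‖(WithLp.equiv 2 (Fin D → ℝ)).symm x‖ := by
  simp only [EuclideanSpace.norm_eq, Real.norm_eq_abs, sq_abs, en]; rfl

lemma en_zero : en (0 : Fin D → ℝ) = 0 := by simp [en]

lemma abs_le_en (x : Fin D → ℝ) (i : Fin D) : |x i| ≤ en x := by
  rw [← Real.sqrt_sq_eq_abs]
  exact Real.sqrt_le_sqrt (Finset.single_le_sum (fun j _ => sq_nonneg (x j))
    (Finset.mem_univ i))

lemma en_smul (a : ℝ) (x : Fin D → ℝ) : en (fun i => a * x i) = |a| * en x := by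
  unfold en
  rw [← Real.sqrt_sq_eq_abs, ← Real.sqrt_mul (sq_nonneg a), Finset.mul_sum]
  congr 1
  exact Finset.sum_congr rfl fun i _ => by ring

lemma en_continuous : Continuous (en (D := D)) :=
  Real.continuous_sqrt.comp <| continuous_finset_sum _ fun i _ =>
    (continuous_apply i).pow 2

/-- Orthogonal projection onto a subspace of `Fin D → ℝ`, with the properties we need. -/
lemma exists_proj (U : Submodule ℝ (Fin D → ℝ)) :
    ∃ P : (Fin D → ℝ) →ₗ[ℝ] (Fin D → ℝ),
      (∀ x ∈ U, P x = x) ∧ (∀ x, P x ∈ U) ∧ (∀ x, en (P x) ≤ en x) := by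
  let L : EuclideanSpace ℝ (Fin D) ≃ₗ[ℝ] (Fin D → ℝ) := WithLp.linearEquiv 2 ℝ (Fin D → ℝ)
  let U' : Submodule ℝ (EuclideanSpace ℝ (Fin D)) := U.comap L.toLinearMap
  have hmem : ∀ y : EuclideanSpace ℝ (Fin D), y ∈ U' ↔ L y ∈ U := fun y => Iff.rfl
  refine ⟨L.toLinearMap ∘ₗ (U'.subtype ∘ₗ (Submodule.orthogonalProjectionOnto U').toLinearMap)
      ∘ₗ L.symm.toLinearMap, ?_, ?_, ?_⟩
  · intro x hx
    have hx' : L.symm x ∈ U' := by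
      rw [hmem, L.apply_symm_apply]; exact hx
    have : Submodule.orthogonalProjectionOnto U' (L.symm x) = ⟨L.symm x, hx'⟩ :=
      Submodule.orthogonalProjectionOnto_mem_subspace_eq_self (⟨L.symm x, hx'⟩ : U')
    simp only [LinearMap.coe_comp, Function.comp_apply, LinearEquiv.coe_coe,
      ContinuousLinearMap.coe_coe, this, Submodule.coe_subtype, L.apply_symm_apply]
  · intro x
    simp only [LinearMap.coe_comp, Function.comp_apply, LinearEquiv.coe_coe,
      ContinuousLinearMap.coe_coe, Submodule.coe_subtype]
    exact (hmem _).1 (Submodule.orthogonalProjectionOnto U' (L.symm x)).2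
  · intro x
    have h1 : ∀ y : EuclideanSpace ℝ (Fin D), en (L y) = ‖y‖ := by
      intro y
      rw [en_eq_norm]
      rfl
    simp only [LinearMap.coe_comp, Function.comp_apply, LinearEquiv.coe_coe,
      ContinuousLinearMap.coe_coe, Submodule.coe_subtype]
    rw [h1]
    have hx : en x = ‖L.symm x‖ := by
      conv_lhs => rw [← L.apply_symm_apply x]
      rw [h1]
    rw [hx]
    calc ‖(Submodule.orthogonalProjectionOnto U' (L.symm x) : EuclideanSpace ℝ (Fin D))‖
        ≤ ‖Submodule.orthogonalProjectionOnto U'‖ * ‖L.symm x‖ :=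
          (Submodule.orthogonalProjectionOnto U').le_opNorm _
      _ ≤ 1 * ‖L.symm x‖ := by
          apply mul_le_mul_of_nonneg_right (Submodule.orthogonalProjectionOnto_norm_le _) (norm_nonneg _)
      _ = ‖L.symm x‖ := one_mul _

lemma vecMulVec_add_left (x y : Fin D → ℝ) (w : Fin N → ℝ) :
    vecMulVec (x + y) w = vecMulVec x w + vecMulVec y w := by
  ext i j; simp [vecMulVec_apply, add_mul]

lemma vecMulVec_smul_left (a : ℝ) (x : Fin D → ℝ) (w : Fin N → ℝ) :
    vecMulVec (a • x) w = a • vecMulVec x w := by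
  ext i j; simp [vecMulVec_apply, mul_assoc]

lemma vecMulVec_zero_left (w : Fin N → ℝ) :
    vecMulVec (0 : Fin D → ℝ) w = 0 := by
  ext i j; simp [vecMulVec_apply]

lemma vecMulVec_add_right (x : Fin D → ℝ) (w v : Fin N → ℝ) :
    vecMulVec x (w + v) = vecMulVec x w + vecMulVec x v := by
  ext i j; simp [vecMulVec_apply, mul_add]

lemma vecMulVec_smul_right (a : ℝ) (x : Fin D → ℝ) (w : Fin N → ℝ) :
    vecMulVec x (a • w) = a • vecMulVec x w := by
  ext i j; simp [vecMulVec_apply]; ring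

lemma vecMulVec_zero_right (x : Fin D → ℝ) :
    vecMulVec x (0 : Fin N → ℝ) = 0 := by
  ext i j; simp [vecMulVec_apply]

/-- Outer products of spanned vectors lie in the span of outer products of the spanning
families. -/
lemma outer_mem_span {ι₁ ι₂ : Type*} (b : ι₁ → (Fin D → ℝ)) (c : ι₂ → (Fin N → ℝ))
    {v : Fin D → ℝ} {w : Fin N → ℝ}
    (hv : v ∈ Submodule.span ℝ (Set.range b)) (hw : w ∈ Submodule.span ℝ (Set.range c)) :
    vecMulVec v w ∈
      Submodule.span ℝ (Set.range fun p : ι₁ × ι₂ => vecMulVec (b p.1) (c p.2)) := by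
  induction hv using Submodule.span_induction with
  | mem x hx =>
    obtain ⟨j, rfl⟩ := hx
    induction hw using Submodule.span_induction with
    | mem y hy =>
      obtain ⟨l, rfl⟩ := hy
      exact Submodule.subset_span ⟨(j, l), rfl⟩
    | zero => rw [vecMulVec_zero_right]; exact Submodule.zero_mem _
    | add y z _ _ hy hz => rw [vecMulVec_add_right]; exact Submodule.add_mem _ hy hz
    | smul a y _ hy => rw [vecMulVec_smul_right]; exact Submodule.smul_mem _ _ hy
  | zero => rw [vecMulVec_zero_left]; exact Submodule.zero_mem _
  | add x y _ _ hx hy => rw [vecMulVec_add_left]; exact Submodule.add_mem _ hx hy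
  | smul a x _ hx => rw [vecMulVec_smul_left]; exact Submodule.smul_mem _ _ hx

lemma obj_continuous : Continuous (obj (D := D) (K := K)) := by
  apply continuous_finset_sum
  intro k _
  exact Real.continuous_sqrt.comp <| continuous_finset_sum _ fun i _ =>
    ((continuous_apply k).comp (continuous_apply i)).pow 2

/-- Existence of a minimizer of the objective on the (nonempty) feasible set. -/
lemma exists_min (Φ : Matrix (Fin K) (Fin N) ℝ) (Ψ : Matrix (Fin D) (Fin N) ℝ)
    (V₀ : Matrix (Fin D) (Fin K) ℝ) (h₀ : Ψ = V₀ * Φ) :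
    ∃ V, Ψ = V * Φ ∧ ∀ V', Ψ = V' * Φ → obj V ≤ obj V' := by
  classical
  set c := obj V₀ with hc
  set S : Set (Matrix (Fin D) (Fin K) ℝ) := {V | Ψ = V * Φ ∧ obj V ≤ c} with hS
  have h1 : IsClosed {V : Matrix (Fin D) (Fin K) ℝ | Ψ = V * Φ} := by
    have he : {V : Matrix (Fin D) (Fin K) ℝ | Ψ = V * Φ} =
        (fun V : Matrix (Fin D) (Fin K) ℝ => V * Φ) ⁻¹' {Ψ} := by
      ext V; simp [eq_comm]
    rw [he]
    exact IsClosed.preimage (continuous_id.matrix_mul continuous_const) isClosed_singleton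
  have h2 : IsClosed {V : Matrix (Fin D) (Fin K) ℝ | obj V ≤ c} :=
    isClosed_le obj_continuous continuous_const
  have hSclosed : IsClosed S := h1.inter h2
  have hbound : ∀ V ∈ S, ∀ i k, V i k ∈ Set.Icc (-c) c := by
    intro V hV i k
    have ha : |V i k| ≤ en (Vᵀ k) := abs_le_en (Vᵀ k) i
    have hb : en (Vᵀ k) ≤ obj V := by
      rw [obj_eq]
      exact Finset.single_le_sum (fun j _ => en_nonneg _) (Finset.mem_univ k)
    exact abs_le.1 (ha.trans (hb.trans hV.2))
  have hsub : S ⊆ Set.univ.pi fun _ : Fin D => Set.univ.pi fun _ : Fin K =>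
      Set.Icc (-c) c := by
    intro V hV
    refine Set.mem_univ_pi.2 ?_
    intro i
    refine Set.mem_univ_pi.2 ?_
    intro k
    exact hbound V hV i k
  have hcompact : IsCompact (Set.univ.pi fun _ : Fin D => Set.univ.pi fun _ : Fin K =>
      Set.Icc (-c) c) :=
    isCompact_univ_pi fun _ => isCompact_univ_pi fun _ => isCompact_Icc
  have hScomp : IsCompact S := hcompact.of_isClosed_subset hSclosed hsub
  have hne : S.Nonempty := ⟨V₀, h₀, le_rfl⟩
  obtain ⟨V, hVS, hmin⟩ := hScomp.exists_isMinOn hne obj_continuous.continuousOn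
  refine ⟨V, hVS.1, ?_⟩
  intro V' hV'
  by_cases h : obj V' ≤ c
  · exact hmin ⟨hV', h⟩
  · exact (hmin ⟨h₀, le_rfl⟩).trans (le_of_lt (not_le.1 h))

open Classical in
/-- Key reduction step: a minimizer whose columns lie in a space spanned by `bU`, with more
than `rΨ * rΦ` nonzero columns, can be replaced by a minimizer with strictly fewer
nonzero columns. -/
lemma reduce {rΨ rΦ : ℕ} (Φ : Matrix (Fin K) (Fin N) ℝ) (Ψ : Matrix (Fin D) (Fin N) ℝ)
    (bU : Fin rΨ → (Fin D → ℝ)) (bR : Fin rΦ → (Fin N → ℝ))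
    (hΦR : ∀ k, Φ k ∈ Submodule.span ℝ (Set.range bR))
    (V : Matrix (Fin D) (Fin K) ℝ)
    (hfeas : Ψ = V * Φ)
    (hcol : ∀ k, Vᵀ k ∈ Submodule.span ℝ (Set.range bU))
    (hmin : ∀ V', Ψ = V' * Φ → obj V ≤ obj V')
    (hbig : rΨ * rΦ < (Finset.univ.filter fun k => Vᵀ k ≠ 0).card) :
    ∃ V' : Matrix (Fin D) (Fin K) ℝ, Ψ = V' * Φ ∧
      (∀ k, V'ᵀ k ∈ Submodule.span ℝ (Set.range bU)) ∧
      (∀ V'', Ψ = V'' * Φ → obj V' ≤ obj V'') ∧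
      (Finset.univ.filter fun k => V'ᵀ k ≠ 0).card <
        (Finset.univ.filter fun k => Vᵀ k ≠ 0).card := by
  classical
  set T := Finset.univ.filter fun k => Vᵀ k ≠ 0 with hT
  clear_value T
  set W := Submodule.span ℝ (Set.range fun p : Fin rΨ × Fin rΦ =>
      vecMulVec (bU p.1) (bR p.2)) with hW
  clear_value W
  have hWrank : Module.finrank ℝ W ≤ rΨ * rΦ := by
    rw [hW]
    have := finrank_range_le_card (R := ℝ)
      (fun p : Fin rΨ × Fin rΦ => vecMulVec (bU p.1) (bR p.2))
    simpa [Set.finrank, Fintype.card_prod] using this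
  have hWmem : ∀ k : Fin K, vecMulVec (Vᵀ k) (Φ k) ∈ W := by
    intro k
    rw [hW]
    exact outer_mem_span bU bR (hcol k) (hΦR k)
  have hnli : ¬ LinearIndependent ℝ
      (fun k : ↥T => (⟨vecMulVec (Vᵀ (k : Fin K)) (Φ (k : Fin K)), hWmem k⟩ : W)) := by
    intro hli
    have := hli.fintype_card_le_finrank
    rw [Fintype.card_coe] at this
    omega
  obtain ⟨g, hgsum, i₀, hg0⟩ := Fintype.not_linearIndependent_iff.1 hnli
  have hgsum' : ∑ k : ↥T, g k • vecMulVec (Vᵀ (k : Fin K)) (Φ (k : Fin K))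
      = (0 : Matrix (Fin D) (Fin N) ℝ) := by
    have := congrArg (Subtype.val) hgsum
    simpa using this
  set cc : Fin K → ℝ := fun k => if h : k ∈ T then g ⟨k, h⟩ else 0 with hcc
  clear_value cc
  have hcT : ∀ k, cc k ≠ 0 → k ∈ T := by
    intro k hk
    by_contra h
    exact hk (by simp [hcc, h])
  have hc0 : ∃ k, cc k ≠ 0 := by
    refine ⟨↑i₀, ?_⟩
    have h1 : cc ↑i₀ = g i₀ := by simp [hcc, i₀.2]
    rw [h1]; exact hg0
  have hccsum : ∑ k : Fin K, cc k • vecMulVec (Vᵀ k) (Φ k) = 0 := by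
    have h1 : ∑ k : Fin K, cc k • vecMulVec (Vᵀ k) (Φ k)
        = ∑ k ∈ T, cc k • vecMulVec (Vᵀ k) (Φ k) :=
      (Finset.sum_subset (Finset.subset_univ T) fun k _ hk => by
        rw [show cc k = 0 by simp [hcc, hk], zero_smul]).symm
    rw [h1, ← Finset.sum_coe_sort T (fun k => cc k • vecMulVec (Vᵀ k) (Φ k))]
    rw [Finset.sum_congr rfl (fun (k : ↥T) _ => by
      rw [show cc ↑k = g k by simp [hcc, k.2]] :
        ∀ k : ↥T, k ∈ Finset.univ →
          cc ↑k • vecMulVec (Vᵀ (k : Fin K)) (Φ (k : Fin K))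
          = g k • vecMulVec (Vᵀ (k : Fin K)) (Φ (k : Fin K)))]
    exact hgsum'
  have h0 : ∀ i n, ∑ k, cc k * (V i k * Φ k n) = 0 := by
    intro i n
    have := congrFun (congrFun hccsum i) n
    simpa [Matrix.sum_apply, vecMulVec_apply, Matrix.smul_apply, smul_eq_mul,
      transpose_apply, mul_assoc] using this
  -- generic facts about perturbed matrices
  have hpert : ∀ c : Fin K → ℝ, (∀ i n, ∑ k, c k * (V i k * Φ k n) = 0) →
      ∀ t : ℝ, Ψ = (Matrix.of fun i k => (1 + t * c k) * V i k) * Φ := by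
    intro c h0c t
    ext i n
    rw [hfeas]
    have : ((Matrix.of fun i k => (1 + t * c k) * V i k) * Φ) i n = (V * Φ) i n := by
      simp only [Matrix.mul_apply, Matrix.of_apply]
      rw [Finset.sum_congr rfl (fun k _ => by ring :
        ∀ k ∈ Finset.univ, (1 + t * c k) * V i k * Φ k n
          = V i k * Φ k n + t * (c k * (V i k * Φ k n))),
        Finset.sum_add_distrib, ← Finset.mul_sum, h0c i n, mul_zero, add_zero]
    exact this.symm
  have hobjpert : ∀ α : Fin K → ℝ,
      obj (Matrix.of fun i k => α k * V i k) = ∑ k, |α k| * en (Vᵀ k) := by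
    intro α
    rw [obj_eq]
    refine Finset.sum_congr rfl fun k _ => ?_
    have h1 : (Matrix.of fun i k => α k * V i k)ᵀ k = fun i => α k * Vᵀ k i := rfl
    rw [h1, en_smul]
  have key : ∀ t : ℝ, (∀ k, 0 ≤ 1 + t * cc k) → 0 ≤ t * ∑ k, cc k * en (Vᵀ k) := by
    intro t ht
    have h1 := hmin _ (hpert cc h0 t)
    rw [hobjpert (fun k => 1 + t * cc k)] at h1
    have h2 : ∑ k, |1 + t * cc k| * en (Vᵀ k)
        = obj V + t * ∑ k, cc k * en (Vᵀ k) := by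
      rw [obj_eq, Finset.mul_sum, ← Finset.sum_add_distrib]
      refine Finset.sum_congr rfl fun k _ => ?_
      rw [abs_of_nonneg (ht k)]; ring
    rw [h2] at h1; linarith
  set B : ℝ := (∑ k, |cc k|) + 1 with hB
  clear_value B
  have hB1 : (1:ℝ) ≤ B := by
    have : 0 ≤ ∑ k, |cc k| := Finset.sum_nonneg fun k _ => abs_nonneg _
    linarith
  have hBpos : 0 < B := by linarith
  have hBinv : (0:ℝ) < 1/B := one_div_pos.2 hBpos
  have hcB : ∀ k, |cc k| ≤ B - 1 := by
    intro k
    have := Finset.single_le_sum (f := fun k => |cc k|)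
      (fun j _ => abs_nonneg _) (Finset.mem_univ k)
    linarith
  have hsmall : ∀ t : ℝ, |t| ≤ 1 / B → ∀ k, 0 ≤ 1 + t * cc k := by
    intro t ht k
    have h1 : |t * cc k| ≤ (1/B) * (B - 1) := by
      rw [abs_mul]
      exact mul_le_mul ht (hcB k) (abs_nonneg _) hBinv.le
    have h2 : (1/B) * (B - 1) = 1 - 1/B := by field_simp
    have h3 := neg_abs_le (t * cc k)
    linarith [hBinv]
  have hs0 : ∑ k, cc k * en (Vᵀ k) = 0 := by
    have hp := key (1/B) (hsmall _ (le_of_eq (abs_of_pos hBinv)))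
    have hm := key (-(1/B)) (hsmall _ (by rw [abs_neg]; exact le_of_eq (abs_of_pos hBinv)))
    nlinarith [hBinv]
  -- pick the column with the largest coefficient and kill it
  obtain ⟨k₀, hk₀⟩ := hc0
  have hne : (Finset.univ : Finset (Fin K)).Nonempty := ⟨k₀, Finset.mem_univ _⟩
  set μ := Finset.univ.sup' hne (fun k => |cc k|) with hμdef
  clear_value μ
  have hμk : ∀ k, |cc k| ≤ μ := fun k => by
    rw [hμdef]
    exact Finset.le_sup' (fun k => |cc k|) (Finset.mem_univ k)
  have hμpos : 0 < μ :=
    lt_of_lt_of_le (abs_pos.2 hk₀) (hμk k₀)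
  have hμ0 : μ ≠ 0 := ne_of_gt hμpos
  obtain ⟨k₂, -, hk₂⟩ := Finset.exists_mem_eq_sup' hne (fun k => |cc k|)
  have hk₂' : |cc k₂| = μ := by rw [hμdef]; exact hk₂.symm
  have hck₂ : cc k₂ ≠ 0 := by
    intro h
    rw [h, abs_zero] at hk₂'
    exact hμ0 hk₂'.symm
  set t : ℝ := -(cc k₂) / μ ^ 2 with ht
  clear_value t
  have hfac : ∀ k, 0 ≤ 1 + t * cc k := by
    intro k
    have h1 : |cc k| ≤ μ := hμk k
    have h2 : -(|cc k₂| * |cc k|) ≤ cc k₂ * cc k := by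
      rw [← abs_mul]
      exact neg_abs_le _
    have h3 : t * cc k = -(cc k₂ * cc k) / μ ^ 2 := by rw [ht]; ring
    have h5 : cc k₂ * cc k ≤ μ ^ 2 := by
      calc cc k₂ * cc k ≤ |cc k₂ * cc k| := le_abs_self _
        _ = |cc k₂| * |cc k| := abs_mul _ _
        _ ≤ μ * μ := mul_le_mul hk₂'.le h1 (abs_nonneg _) hμpos.le
        _ = μ ^ 2 := (sq μ).symm
    have h6 : cc k₂ * cc k / μ ^ 2 ≤ 1 := (div_le_one (pow_pos hμpos 2)).2 h5
    rw [h3, neg_div]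
    linarith only [h6]
  have hfack₂ : 1 + t * cc k₂ = 0 := by
    have h1 : t * cc k₂ = -(cc k₂ ^ 2) / μ ^ 2 := by rw [ht]; ring
    have h2 : cc k₂ ^ 2 = μ ^ 2 := by rw [← sq_abs, hk₂']
    rw [h1, h2]
    field_simp
    norm_num
  have hk₂T : k₂ ∈ T := hcT k₂ hck₂
  set V' : Matrix (Fin D) (Fin K) ℝ :=
    Matrix.of fun i k => (1 + t * cc k) * V i k with hV'
  have hV'col : ∀ k, V'ᵀ k = (1 + t * cc k) • Vᵀ k := by
    intro k; funext i; rfl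
  clear_value V'
  have hobjV' : obj V' = obj V := by
    rw [hV', hobjpert (fun k => 1 + t * cc k), obj_eq]
    have h1 : ∑ k, |1 + t * cc k| * en (Vᵀ k)
        = (∑ k, en (Vᵀ k)) + t * ∑ k, cc k * en (Vᵀ k) := by
      rw [Finset.mul_sum, ← Finset.sum_add_distrib]
      refine Finset.sum_congr rfl fun k _ => ?_
      rw [abs_of_nonneg (hfac k)]; ring
    rw [h1, hs0, mul_zero, add_zero]
  refine ⟨V', ?_, ?_, ?_, ?_⟩
  · rw [hV']
    exact hpert cc h0 t
  · intro k
    rw [hV'col]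
    exact Submodule.smul_mem _ _ (hcol k)
  · intro V'' hV''
    rw [hobjV']
    exact hmin V'' hV''
  · have hsub : (Finset.univ.filter fun k => V'ᵀ k ≠ 0) ⊆ T.erase k₂ := by
      intro k hk
      rw [Finset.mem_filter] at hk
      rw [Finset.mem_erase]
      constructor
      · rintro rfl
        apply hk.2
        rw [hV'col, hfack₂, zero_smul]
      · by_contra h
        apply hk.2
        have hz : Vᵀ k = 0 := by
          by_contra h'
          exact h (by rw [hT]; exact Finset.mem_filter.2 ⟨Finset.mem_univ _, h'⟩)
        rw [hV'col, hz, smul_zero]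
    calc (Finset.univ.filter fun k => V'ᵀ k ≠ 0).card
        ≤ (T.erase k₂).card := Finset.card_le_card hsub
      _ < T.card := Finset.card_erase_lt_of_mem hk₂T

/-- A basis of a submodule, coerced to the ambient space, spans the submodule. -/
lemma span_coe_basis {M : Type*} [AddCommGroup M] [Module ℝ M] {U : Submodule ℝ M}
    {ι : Type*} (b : Module.Basis ι ℝ U) :
    Submodule.span ℝ (Set.range fun j => (b j : M)) = U := by
  have h1 : (Set.range fun j => (b j : M)) = U.subtype '' Set.range b := by
    rw [← Set.range_comp]; rfl
  rw [h1, Submodule.span_image, b.span_eq, Submodule.map_subtype_top]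

open Classical in
lemma shrink {rΨ rΦ : ℕ} (Φ : Matrix (Fin K) (Fin N) ℝ) (Ψ : Matrix (Fin D) (Fin N) ℝ)
    (bU : Fin rΨ → (Fin D → ℝ)) (bR : Fin rΦ → (Fin N → ℝ))
    (hΦR : ∀ k, Φ k ∈ Submodule.span ℝ (Set.range bR)) :
    ∀ n : ℕ, ∀ V : Matrix (Fin D) (Fin K) ℝ, Ψ = V * Φ →
      (∀ k, Vᵀ k ∈ Submodule.span ℝ (Set.range bU)) →
      (∀ V', Ψ = V' * Φ → obj V ≤ obj V') →
      (Finset.univ.filter fun k => Vᵀ k ≠ 0).card ≤ n →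
      ∃ V' : Matrix (Fin D) (Fin K) ℝ, Ψ = V' * Φ ∧
        (∀ V'', Ψ = V'' * Φ → obj V' ≤ obj V'') ∧
        (Finset.univ.filter fun k => V'ᵀ k ≠ 0).card ≤ rΨ * rΦ := by
  intro n
  induction n with
  | zero =>
    intro V h1 h2 h3 h4
    exact ⟨V, h1, h3, by omega⟩
  | succ n ih =>
    intro V h1 h2 h3 h4
    by_cases hle : (Finset.univ.filter fun k => Vᵀ k ≠ 0).card ≤ rΨ * rΦ
    · exact ⟨V, h1, h3, hle⟩
    · obtain ⟨V', hf, hc, hm, hcard⟩ := reduce Φ Ψ bU bR hΦR V h1 h2 h3 (by omega)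
      exact ih V' hf hc hm (by omega)

end MTLAux

open MTLAux in
theorem multitask_lasso_sparsity_upper {D N K : ℕ} (rΦ rΨ : ℕ)
    (Ψ : Matrix (Fin D) (Fin N) ℝ) (Φ : Matrix (Fin K) (Fin N) ℝ)
    (hΦ : Φ.rank = rΦ) (hΨ : Ψ.rank = rΨ)
    (hrow : Submodule.span ℝ (Set.range Ψ) ≤ Submodule.span ℝ (Set.range Φ))
    (hK : rΨ ≤ K) :
    ∃ V : Matrix (Fin D) (Fin K) ℝ,
      Ψ = V * Φ ∧
      (∀ V' : Matrix (Fin D) (Fin K) ℝ, Ψ = V' * Φ →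
        ∑ k, Real.sqrt (∑ i, (V i k) ^ 2) ≤ ∑ k, Real.sqrt (∑ i, (V' i k) ^ 2)) ∧
      (@Finset.filter _ (fun k => Vᵀ k ≠ 0) (fun _ => inferInstance) Finset.univ).card ≤ rΦ * rΨ := by
  classical
  -- the column space of Ψ and the row space of Φ
  set U₀ : Submodule ℝ (Fin D → ℝ) := Submodule.span ℝ (Set.range Ψᵀ) with hU₀def
  set RΦ : Submodule ℝ (Fin N → ℝ) := Submodule.span ℝ (Set.range Φ) with hRΦdef
  have hU₀rank : Module.finrank ℝ U₀ = rΨ := by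
    rw [hU₀def, show Set.range Ψᵀ = Set.range Ψ.col from rfl, ← Matrix.rank_eq_finrank_span_cols, hΨ]
  have hRΦrank : Module.finrank ℝ RΦ = rΦ := by
    rw [hRΦdef, show Set.range Φ = Set.range Φ.row from rfl, ← Matrix.rank_eq_finrank_span_row, hΦ]
  -- bases
  let bU : Module.Basis (Fin rΨ) ℝ U₀ := Module.finBasisOfFinrankEq ℝ U₀ hU₀rank
  let bR : Module.Basis (Fin rΦ) ℝ RΦ := Module.finBasisOfFinrankEq ℝ RΦ hRΦrank
  let bU' : Fin rΨ → (Fin D → ℝ) := fun j => (bU j : Fin D → ℝ)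
  let bR' : Fin rΦ → (Fin N → ℝ) := fun j => (bR j : Fin N → ℝ)
  have hbU' : Submodule.span ℝ (Set.range bU') = U₀ := span_coe_basis bU
  have hbR' : Submodule.span ℝ (Set.range bR') = RΦ := span_coe_basis bR
  have hΦR : ∀ k, Φ k ∈ Submodule.span ℝ (Set.range bR') := by
    intro k
    rw [hbR', hRΦdef]
    exact Submodule.subset_span ⟨k, rfl⟩
  -- feasibility
  have hfeas0 : ∀ d, ∃ c : Fin K → ℝ, ∑ k, c k • Φ k = Ψ d := by
    intro d
    exact (Submodule.mem_span_range_iff_exists_fun ℝ).1 (hrow (Submodule.subset_span ⟨d, rfl⟩))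
  choose C hC using hfeas0
  have hV₀ : Ψ = (Matrix.of C) * Φ := by
    ext d n
    have := congrFun (hC d) n
    simp only [Finset.sum_apply, Pi.smul_apply, smul_eq_mul] at this
    rw [Matrix.mul_apply]
    exact this.symm
  -- a minimizer
  obtain ⟨V₁, hV₁f, hV₁min⟩ := exists_min Φ Ψ (Matrix.of C) hV₀
  -- project its columns onto the column space of Ψ
  obtain ⟨P, hPfix, hPmem, hPnorm⟩ := exists_proj U₀
  set V₂ : Matrix (Fin D) (Fin K) ℝ := Matrix.of fun i k => P (V₁ᵀ k) i with hV₂def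
  have hV₂col : ∀ k, V₂ᵀ k = P (V₁ᵀ k) := fun k => rfl
  have hV₂f : Ψ = V₂ * Φ := by
    ext d n
    set y : Fin D → ℝ := fun d' => ∑ k, V₁ d' k * Φ k n with hy
    have hyΨ : y = Ψᵀ n := by
      funext d'
      rw [hy]
      have := congrFun (congrFun hV₁f d') n
      replace this := this.trans Matrix.mul_apply
      exact this.symm
    have hyU : y ∈ U₀ := by
      rw [hyΨ, hU₀def]
      exact Submodule.subset_span ⟨n, rfl⟩
    have hsum : y = ∑ k, Φ k n • V₁ᵀ k := by
      funext d'
      rw [hy]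
      simp only [Finset.sum_apply, Pi.smul_apply, smul_eq_mul]
      exact Finset.sum_congr rfl fun k _ => mul_comm _ _
    have hPsum : P y = ∑ k, Φ k n • P (V₁ᵀ k) := by
      rw [hsum, map_sum]
      exact Finset.sum_congr rfl fun k _ => map_smul P _ _
    have h2 : (V₂ * Φ) d n = (∑ k, Φ k n • P (V₁ᵀ k)) d := by
      rw [Matrix.mul_apply]
      simp only [Finset.sum_apply, Pi.smul_apply, smul_eq_mul, hV₂def, Matrix.of_apply]
      exact Finset.sum_congr rfl fun k _ => mul_comm _ _
    rw [h2, ← hPsum, hPfix y hyU]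
    have : y d = Ψ d n := by rw [hyΨ]; rfl
    rw [this]
  have hobj₂ : obj V₂ ≤ obj V₁ := by
    rw [obj_eq, obj_eq]
    refine Finset.sum_le_sum fun k _ => ?_
    rw [hV₂col k]
    exact hPnorm (V₁ᵀ k)
  have hV₂min : ∀ V', Ψ = V' * Φ → obj V₂ ≤ obj V' :=
    fun V' h => le_trans hobj₂ (hV₁min V' h)
  have hV₂colU : ∀ k, V₂ᵀ k ∈ Submodule.span ℝ (Set.range bU') := by
    intro k
    rw [hV₂col k, hbU']
    exact hPmem _
  obtain ⟨V', hf, hm, hcard⟩ := shrink Φ Ψ bU' bR' hΦR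
    ((Finset.univ.filter fun k => V₂ᵀ k ≠ 0).card) V₂ hV₂f hV₂colU hV₂min le_rfl
  refine ⟨V', hf, fun V'' h => hm V'' h, ?_⟩
  calc _ ≤ rΨ * rΦ := by convert hcard
    _ = rΦ * rΨ := Nat.mul_comm _ _
end
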